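/- On the interval (h*₃(k_r), ∞), where h*₃(k_r) = (C₃/6)·(D/k_r + 1/(4π·σ))⁻¹, the function h ↦ h³·ρ³(k_r,h) is strictly decreasing, and for every h in this interval one has h³·ρ³(k_r,h) > k_CK, where k_CK = 4π·σ·D·k_r/(4π·σ·D + k_r). -/

import Mathlib

/-- The constant `C₃ ≈ 1.5164` from the 3D mesoscopic rate expression. -/
noncomputable def C3 : ℝ := 1.5164

/-- `G³(h) = 1/(4π·σ) − C₃/(6h)`. -/
noncomputable def G3 (σ h : ℝ) : ℝ := 1 / (4 * Real.pi * σ) - C3 / (6 * h)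

/-- The 3D mesoscopic association rate `ρ³(k_r,h) = (k_r/h³)·(1+(k_r/D)·G³(h))⁻¹`. -/
noncomputable def rho3 (σ D kr h : ℝ) : ℝ :=
  (kr / h ^ 3) * (1 + (kr / D) * G3 σ h)⁻¹

/-- The 3D critical voxel size `h*₃(k_r) = (C₃/6)·(D/k_r + 1/(4π·σ))⁻¹`. -/
noncomputable def hstar3 (σ D kr : ℝ) : ℝ :=
  (C3 / 6) * (D / kr + 1 / (4 * Real.pi * σ))⁻¹

/-- The Collins–Kimball rate `k_CK = 4π·σ·D·k_r/(4π·σ·D + k_r)`. -/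
noncomputable def kCK (σ D kr : ℝ) : ℝ :=
  4 * Real.pi * σ * D * kr / (4 * Real.pi * σ * D + kr)

theorem stmt_9 (σ D kr : ℝ) (hσ : 0 < σ) (hD : 0 < D) (hkr : 0 < kr) :
    StrictAntiOn (fun h : ℝ => h ^ 3 * rho3 σ D kr h) (Set.Ioi (hstar3 σ D kr)) ∧
    ∀ h : ℝ, h ∈ Set.Ioi (hstar3 σ D kr) → kCK σ D kr < h ^ 3 * rho3 σ D kr h := by
  have hπ : (0:ℝ) < Real.pi := Real.pi_pos
  have hC3 : (0:ℝ) < C3 := by norm_num [C3]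
  set A : ℝ := 1 + kr / (4 * Real.pi * σ * D) with hA
  set B : ℝ := C3 * kr / (6 * D) with hB
  have hApos : 0 < A := by positivity
  have hBpos : 0 < B := by positivity
  have hstar_eq : hstar3 σ D kr = B / A := by
    rw [hstar3, hA, hB]
    field_simp
  have hstar_pos : 0 < hstar3 σ D kr := by rw [hstar_eq]; positivity
  have key : ∀ h : ℝ, h ∈ Set.Ioi (hstar3 σ D kr) →
      h ^ 3 * rho3 σ D kr h = kr * (A - B / h)⁻¹ ∧ 0 < A - B / h := by
    intro h hh
    have hh' : hstar3 σ D kr < h := hh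
    have hhp : 0 < h := hstar_pos.trans hh'
    have hBA : B / A < h := by rw [← hstar_eq]; exact hh'
    have hpos : 0 < A - B / h := by
      have : B / h < A := by
        rw [div_lt_iff₀ hhp]
        rw [div_lt_iff₀ hApos] at hBA
        nlinarith
      linarith
    refine ⟨?_, hpos⟩
    have hden : 1 + kr / D * G3 σ h = A - B / h := by
      rw [G3, hA, hB]
      field_simp
      ring
    rw [rho3, hden]
    field_simp
  constructor
  · intro h1 h1m h2 h2m hlt
    obtain ⟨e1, p1⟩ := key h1 h1m
    obtain ⟨e2, p2⟩ := key h2 h2m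
    have h1p : 0 < h1 := hstar_pos.trans h1m
    have h2p : 0 < h2 := h1p.trans hlt
    simp only
    rw [e1, e2]
    have hd : A - B / h1 < A - B / h2 := by
      have : B / h2 < B / h1 := by
        rw [div_lt_div_iff₀ h2p h1p]
        nlinarith
      linarith
    have hinv : (A - B / h2)⁻¹ < (A - B / h1)⁻¹ := by
      apply inv_strictAnti₀ p1 hd
    exact mul_lt_mul_of_pos_left hinv hkr
  · intro h hm
    obtain ⟨e, p⟩ := key h hm
    rw [e]
    have hhp : 0 < h := hstar_pos.trans hm
    have hBh : 0 < B / h := div_pos hBpos hhp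
    have hlt : A - B / h < A := by linarith
    have hkCK : kCK σ D kr = kr * A⁻¹ := by
      rw [kCK, hA]
      field_simp
    rw [hkCK]
    exact mul_lt_mul_of_pos_left (inv_strictAnti₀ p hlt) hkr
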